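/- Let S be a compact Hausdorff space with associative operation * with continuous right translations, I a minimal closed left ideal of S containing an idempotent p₀ with q * p₀ = q for all q ∈ I. Then for every t ∈ I there exists s ∈ I with s * t = p₀, and consequently every map of the form p ↦ p * t restricted to I is a bijection of I onto I. -/
import Mathlib


/-- In a minimal nonempty closed left ideal `I` with an idempotent `p₀` acting as right
identity on `I`: every `t ∈ I` has `s ∈ I` with `s * t = p₀`, and `p ↦ p * t` is a
bijection of `I` onto `I`. -/
theorem stmt_5 {S : Type*} [TopologicalSpace S] [CompactSpace S] [T2Space S]
    (mul : S → S → S)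
    (assoc : ∀ a b c : S, mul (mul a b) c = mul a (mul b c))
    (rcont : ∀ q : S, Continuous fun p : S => mul p q)
    (I : Set S) (hne : I.Nonempty) (hcl : IsClosed I)
    (hideal : ∀ (p : S), ∀ q ∈ I, mul p q ∈ I)
    (hmin : ∀ L ⊆ I, L.Nonempty → IsClosed L → (∀ (p : S), ∀ q ∈ L, mul p q ∈ L) → L = I)
    (p₀ : S) (hp₀ : p₀ ∈ I) (hidem : mul p₀ p₀ = p₀)
    (hrid : ∀ q ∈ I, mul q p₀ = q) :
    ∀ t ∈ I, (∃ s ∈ I, mul s t = p₀) ∧ Set.BijOn (fun p : S => mul p t) I I := by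
  have key : ∀ u ∈ I, (fun p : S => mul p u) '' I = I := by
    intro u hu
    apply hmin
    · rintro _ ⟨p, hp, rfl⟩
      exact hideal p u hu
    · exact hne.image _
    · exact (hcl.isCompact.image (rcont u)).isClosed
    · rintro p _ ⟨q, hq, rfl⟩
      exact ⟨mul p q, hideal p q hq, assoc p q u⟩
  intro t ht
  obtain ⟨s, hs, hst⟩ : ∃ s ∈ I, mul s t = p₀ := by
    have h := (key t ht).symm ▸ hp₀
    obtain ⟨s, hs, h⟩ := h
    exact ⟨s, hs, h⟩
  have hu : mul t s ∈ I := hideal t s hs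
  have hru : ∀ a ∈ I, mul a (mul t s) = a := by
    intro a ha
    obtain ⟨q, hq, rfl⟩ := (key (mul t s) hu).symm ▸ ha
    show mul (mul q (mul t s)) (mul t s) = mul q (mul t s)
    rw [assoc, ← assoc (mul t s), assoc t s t, hst, hrid t ht]
  refine ⟨⟨s, hs, hst⟩, (fun p hp => hideal p t ht), ?_, ?_⟩
  · intro a ha b hb h
    have h2 : mul a (mul t s) = mul b (mul t s) := by
      rw [← assoc, ← assoc]
      simp only at h
      rw [h]
    rwa [hru a ha, hru b hb] at h2
  · intro y hy
    exact (key t ht).symm ▸ hy
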